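/- Over the ring C₃ = (R/π²)(e → f) with R = 𝔽₃[X] and π = X, the 𝔽₃-dimension of the stable Hom-space Hom(Y₄, Y₄) in mod-C₃ modulo projectives equals 2, where Y₄ is the C₃-module given by (R/π² → 0). -/

import Mathlib

open Polynomial

set_option maxHeartbeats 1000000 in
/-- The ground ring `R/π² = 𝔽₃[X]/(X²)`. -/
abbrev S3 : Type := Polynomial (ZMod 3) ⧸ Ideal.span {(Polynomial.X : Polynomial (ZMod 3)) ^ 2}

/-- The ring `C₃`: `2 × 2` upper triangular matrices over `S`, i.e. the path algebra of
the quiver `e ⟶ f` over `S`. -/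
def Tri (S : Type*) [CommRing S] : Subring (Matrix (Fin 2) (Fin 2) S) where
  carrier := {M | M 1 0 = 0}
  zero_mem' := by simp
  one_mem' := by simp [Matrix.one_apply]
  add_mem' := by
    intro a b ha hb
    simp only [Set.mem_setOf_eq, Matrix.add_apply] at *
    simp [ha, hb]
  neg_mem' := by
    intro a ha
    simp only [Set.mem_setOf_eq, Matrix.neg_apply] at *
    simp [ha]
  mul_mem' := by
    intro a b ha hb
    simp only [Set.mem_setOf_eq] at *
    simp [Matrix.mul_apply, Fin.sum_univ_two, ha, hb]

variable (S : Type) [CommRing S]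

/-- The module `Y₄ = (R/π² ⟶ 0)`: the underlying abelian group is `S` itself, a
triangular matrix `M` acting through its entry `M 1 1`. -/
noncomputable instance : SMul (Tri S) S :=
  ⟨fun M x => (M : Matrix (Fin 2) (Fin 2) S) 1 1 * x⟩

lemma Tri.smul_def (M : Tri S) (x : S) :
    M • x = (M : Matrix (Fin 2) (Fin 2) S) 1 1 * x := rfl

noncomputable instance : Module (Tri S) S where
  one_smul x := by rw [Tri.smul_def]; simp [Matrix.one_apply]
  mul_smul M N x := by
    rw [Tri.smul_def, Tri.smul_def, Tri.smul_def]
    have hM : (M : Matrix (Fin 2) (Fin 2) S) 1 0 = 0 := M.2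
    push_cast
    simp [Matrix.mul_apply, Fin.sum_univ_two, hM, mul_assoc]
  smul_zero M := by rw [Tri.smul_def]; exact mul_zero _
  smul_add M x y := by rw [Tri.smul_def, Tri.smul_def, Tri.smul_def]; exact mul_add _ _ _
  add_smul M N x := by
    rw [Tri.smul_def, Tri.smul_def, Tri.smul_def]
    push_cast
    rw [Matrix.add_apply, add_mul]
  zero_smul x := by rw [Tri.smul_def]; simp

noncomputable instance (k : Type*) [CommSemiring k] [Algebra k S] :
    SMulCommClass (Tri S) k S :=
  ⟨fun M c x => by rw [Tri.smul_def, Tri.smul_def]; exact mul_smul_comm c _ x⟩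

/-- The `ℤ/3`-subspace of endomorphisms of `Y₄` spanned by those factoring through a
projective `C₃`-module. -/
noncomputable def factProj : Submodule (ZMod 3) (S3 →ₗ[Tri S3] S3) :=
  Submodule.span (ZMod 3)
    {f : S3 →ₗ[Tri S3] S3 | ∃ (P : Type) (_ : AddCommGroup P) (_ : Module (Tri S3) P),
      Module.Projective (Tri S3) P ∧
      ∃ (g : S3 →ₗ[Tri S3] P) (h : P →ₗ[Tri S3] S3), h.comp g = f}

/-- The `𝔽₃`-dimension of the stable Hom-space `Hom(Y₄, Y₄)` in `mod-C₃` modulo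
projectives equals `2`, where `Y₄ = (R/π² ⟶ 0)`. -/

noncomputable def EE11 : Tri S3 := ⟨Matrix.single 1 1 1, show Matrix.single 1 1 (1 : S3) 1 0 = 0 by simp [Matrix.single]⟩
noncomputable def EE01 : Tri S3 := ⟨Matrix.single 0 1 1, show Matrix.single 0 1 (1 : S3) 1 0 = 0 by simp [Matrix.single]⟩

lemma EE11_smul (x : S3) : EE11 • x = x := by
  rw [Tri.smul_def]; simp [EE11, Matrix.single]

lemma EE01_smul (x : S3) : EE01 • x = 0 := by
  rw [Tri.smul_def]; simp [EE01, Matrix.single]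

lemma tri_eq_zero (a : Tri S3) (h1 : EE11 * a = a) (h2 : EE01 * a = 0) : a = 0 := by
  have h1' : (EE11 : Matrix (Fin 2) (Fin 2) S3) * (a : Matrix (Fin 2) (Fin 2) S3)
      = (a : Matrix (Fin 2) (Fin 2) S3) := congrArg Subtype.val h1
  have h2' : (EE01 : Matrix (Fin 2) (Fin 2) S3) * (a : Matrix (Fin 2) (Fin 2) S3) = 0 :=
      congrArg Subtype.val h2
  have ha : (a : Matrix (Fin 2) (Fin 2) S3) 1 0 = 0 := a.2
  apply Subtype.ext
  show (a : Matrix (Fin 2) (Fin 2) S3) = 0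
  have e00 := congrFun (congrFun h1' 0) 0
  have e01 := congrFun (congrFun h1' 0) 1
  have f11 := congrFun (congrFun h2' 0) 1
  simp [EE11, EE01, Matrix.mul_apply, Fin.sum_univ_two, Matrix.single, ha] at e00 e01 f11
  ext i j
  fin_cases i <;> fin_cases j <;>
    simp [← e00, ← e01, ha, f11]

set_option synthInstance.maxHeartbeats 1000000 in
set_option maxHeartbeats 2000000 in
lemma hom_to_finsupp_eq_zero {ι : Type} (ψ : S3 →ₗ[Tri S3] (ι →₀ Tri S3)) : ψ = 0 := by
  apply LinearMap.ext
  intro x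
  have h1 : EE11 • ψ x = ψ x := by rw [← map_smul, EE11_smul]
  have h2 : EE01 • ψ x = 0 := by rw [← map_smul, EE01_smul, map_zero]
  show ψ x = 0
  refine Finsupp.ext fun i => ?_
  apply tri_eq_zero
  · have h1' := DFunLike.congr_fun h1 i
    rwa [Finsupp.smul_apply, smul_eq_mul] at h1'
  · have h2' := DFunLike.congr_fun h2 i
    rwa [Finsupp.smul_apply, smul_eq_mul, Finsupp.zero_apply] at h2'

lemma factProj_eq_bot : factProj = ⊥ := by
  rw [factProj, Submodule.span_eq_bot]
  rintro f ⟨P, _, _, hP, g, h, rfl⟩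
  obtain ⟨s, hs⟩ := Module.projective_def'.mp hP
  have hg : g = 0 := by
    have h0 : g = (Finsupp.linearCombination (Tri S3) id).comp (s.comp g) := by
      rw [← LinearMap.comp_assoc, hs, LinearMap.id_comp]
    rw [h0, hom_to_finsupp_eq_zero (s.comp g), LinearMap.comp_zero]
  rw [hg, LinearMap.comp_zero]

/-- Multiplication by `c` as a `Tri S3`-linear endomorphism of `S3`. -/
noncomputable def mulMap (c : S3) : S3 →ₗ[Tri S3] S3 where
  toFun x := c * x
  map_add' := mul_add c
  map_smul' M x := by
    rw [RingHom.id_apply, Tri.smul_def, Tri.smul_def]; ring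

lemma hom_eq_mulMap (f : S3 →ₗ[Tri S3] S3) : f = mulMap (f 1) := by
  apply LinearMap.ext
  intro x
  have hx : (⟨Matrix.single 1 1 x, show Matrix.single 1 1 x 1 0 = 0 by simp [Matrix.single]⟩ : Tri S3) • (1 : S3)
      = x := by
    rw [Tri.smul_def]; simp [Matrix.single]
  calc f x = f ((⟨Matrix.single 1 1 x, show Matrix.single 1 1 x 1 0 = 0 by simp [Matrix.single]⟩ : Tri S3) • 1) :=
        by rw [hx]
    _ = (⟨Matrix.single 1 1 x, show Matrix.single 1 1 x 1 0 = 0 by simp [Matrix.single]⟩ : Tri S3) • f 1 :=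
        map_smul f _ _
    _ = x * f 1 := by rw [Tri.smul_def]; simp [Matrix.single]
    _ = mulMap (f 1) x := mul_comm _ _

noncomputable def homEquiv : (S3 →ₗ[Tri S3] S3) ≃ₗ[ZMod 3] S3 where
  toFun f := f 1
  map_add' _ _ := rfl
  map_smul' _ _ := rfl
  invFun := mulMap
  left_inv f := (hom_eq_mulMap f).symm
  right_inv c := mul_one c

lemma finrank_S3 : Module.finrank (ZMod 3) S3 = 2 := by
  have hne : (X ^ 2 : Polynomial (ZMod 3)) ≠ 0 := pow_ne_zero _ X_ne_zero
  have : Module.finrank (ZMod 3) (AdjoinRoot (X ^ 2 : Polynomial (ZMod 3)))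
      = (X ^ 2 : Polynomial (ZMod 3)).natDegree := by
    rw [(AdjoinRoot.powerBasis hne).finrank]
    rfl
  rw [Polynomial.natDegree_X_pow] at this
  exact this

theorem stmt16 :
    Module.finrank (ZMod 3) ((S3 →ₗ[Tri S3] S3) ⧸ factProj) = 2 := by
  rw [(Submodule.quotEquivOfEqBot factProj factProj_eq_bot).finrank_eq,
    homEquiv.finrank_eq, finrank_S3]
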